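/- There are no coprime integers a, b and integers s, t with a² = -3s(23s² + 12st + 2t²), b² = 18s³ + 9s²t - 2t³, and c = 3s² + 12st + 2t² satisfying gcd(c, 10) = 1. -/

import Mathlib

theorem stmt_11 :
    ¬ ∃ a b s t c : ℤ, Int.gcd a b = 1 ∧
      a ^ 2 = -3 * s * (23 * s ^ 2 + 12 * s * t + 2 * t ^ 2) ∧
      b ^ 2 = 18 * s ^ 3 + 9 * s ^ 2 * t - 2 * t ^ 3 ∧
      c = 3 * s ^ 2 + 12 * s * t + 2 * t ^ 2 ∧
      Int.gcd c 10 = 1 := by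
  rintro ⟨a, b, s, t, c, hab, ha, hb, hc, hc10⟩
  -- c is odd
  have hcodd : ¬ (2 : ℤ) ∣ c := by
    intro h2
    have : (2 : ℤ) ∣ (Int.gcd c 10 : ℤ) := Int.dvd_coe_gcd h2 (by norm_num)
    rw [hc10] at this
    norm_num at this
  -- hence s is odd
  have hsodd : s % 2 = 1 := by
    rcases Int.emod_two_eq s with h | h
    · exfalso
      apply hcodd
      obtain ⟨k, hk⟩ := Int.dvd_of_emod_eq_zero h
      exact ⟨6 * k ^ 2 + 12 * k * t + t ^ 2, by rw [hc, hk]; ring⟩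
    · exact h
  have hsne : s ≠ 0 := by intro h; rw [h] at hsodd; norm_num at hsodd
  have hs1 : 1 ≤ s ^ 2 := by
    rcases lt_or_gt_of_ne hsne with h | h
    · nlinarith
    · nlinarith
  -- the quadratic form is positive
  have hPpos : 0 < 23 * s ^ 2 + 12 * s * t + 2 * t ^ 2 := by
    nlinarith [sq_nonneg (2 * t + 6 * s)]
  -- s < 0
  have hsneg : s < 0 := by
    rcases lt_trichotomy s 0 with h | h | h
    · exact h
    · exact absurd h hsne
    · exfalso
      have : a ^ 2 < 0 := by rw [ha]; nlinarith
      nlinarith [sq_nonneg a]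
  -- 3 ∣ a
  have h3a : (3 : ℤ) ∣ a := by
    have : (3 : ℤ) ∣ a ^ 2 := ⟨-s * (23 * s ^ 2 + 12 * s * t + 2 * t ^ 2), by rw [ha]; ring⟩
    exact Int.prime_three.dvd_of_dvd_pow this
  obtain ⟨a1, ha1⟩ := h3a
  subst ha1
  -- 3 ∣ s, via ZMod 3
  have h3s : (3 : ℤ) ∣ s := by
    have key3 : 3 * a1 ^ 2 = -s * (23 * s ^ 2 + 12 * s * t + 2 * t ^ 2) := by
      have h9 : 3 * (3 * a1 ^ 2) = 3 * (-s * (23 * s ^ 2 + 12 * s * t + 2 * t ^ 2)) := by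
        linear_combination ha
      linarith
    have hcast := congrArg (fun x : ℤ => (x : ZMod 3)) key3
    push_cast at hcast
    have hS : (s : ZMod 3) = 0 := by
      revert hcast
      generalize (s : ZMod 3) = S
      generalize (t : ZMod 3) = T
      generalize (a1 : ZMod 3) = A
      revert S T A
      decide
    exact_mod_cast (ZMod.intCast_zmod_eq_zero_iff_dvd s 3).mp hS
  obtain ⟨w, hw⟩ := h3s
  -- let v = -w > 0, v odd
  obtain ⟨v, hsv⟩ : ∃ v : ℤ, s = -3 * v := ⟨-w, by omega⟩
  have hvpos : 0 < v := by nlinarith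
  have hvodd : v % 2 = 1 := by omega
  -- a1 ^ 2 = v * Q with Q = 207v² - 36vt + 2t²
  have hA1 : a1 ^ 2 = v * (207 * v ^ 2 - 36 * v * t + 2 * t ^ 2) := by
    have h9 : 9 * a1 ^ 2 = 9 * (v * (207 * v ^ 2 - 36 * v * t + 2 * t ^ 2)) := by
      rw [hsv] at ha
      linear_combination ha
    linarith
  have hQpos : 0 < 207 * v ^ 2 - 36 * v * t + 2 * t ^ 2 := by
    nlinarith [sq_nonneg (2 * t - 18 * v), hvpos]
  -- coprimality of v and Q
  have hcop : IsCoprime v (207 * v ^ 2 - 36 * v * t + 2 * t ^ 2) := by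
    rw [Int.isCoprime_iff_gcd_eq_one]
    by_contra hg
    obtain ⟨p, hp, hpdvd⟩ := Nat.exists_prime_and_dvd hg
    have hpprime : Prime (p : ℤ) := Nat.prime_iff_prime_int.mp hp
    have hpv : (p : ℤ) ∣ v := dvd_trans (Int.ofNat_dvd.mpr hpdvd) (Int.gcd_dvd_left _ _)
    have hpQ : (p : ℤ) ∣ 207 * v ^ 2 - 36 * v * t + 2 * t ^ 2 :=
      dvd_trans (Int.ofNat_dvd.mpr hpdvd) (Int.gcd_dvd_right _ _)
    -- p ≠ 2 since v odd
    have hp2 : p ≠ 2 := by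
      intro h2
      obtain ⟨k, hk⟩ := hpv
      rw [h2] at hk; push_cast at hk; omega
    -- p ∣ t
    have hpt : (p : ℤ) ∣ t := by
      have h2t2 : (p : ℤ) ∣ 2 * t ^ 2 := by
        obtain ⟨k, hk⟩ := hpv
        obtain ⟨m, hm⟩ := hpQ
        exact ⟨m - 207 * k ^ 2 * (p : ℤ) + 36 * k * t, by
          linear_combination hm + (36 * t - 207 * (v + (p : ℤ) * k)) * hk⟩
      rcases hpprime.dvd_mul.mp h2t2 with h' | h'
      · exfalso
        have : p ∣ 2 := by exact_mod_cast h'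
        exact hp2 ((Nat.prime_dvd_prime_iff_eq hp Nat.prime_two).mp this)
      · exact hpprime.dvd_of_dvd_pow h'
    -- p ∣ a1
    have hpa : (p : ℤ) ∣ 3 * a1 := by
      have : (p : ℤ) ∣ a1 ^ 2 := hA1 ▸ Dvd.dvd.mul_right hpv _
      exact Dvd.dvd.mul_left (hpprime.dvd_of_dvd_pow this) 3
    -- p ∣ b
    have hpb : (p : ℤ) ∣ b := by
      have hps : (p : ℤ) ∣ s := hsv ▸ Dvd.dvd.mul_left hpv (-3)
      have hdvdb2 : (p : ℤ) ∣ b ^ 2 := by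
        obtain ⟨k, hk⟩ := hps
        obtain ⟨m, hm⟩ := hpt
        exact ⟨18 * k ^ 3 * (p : ℤ) ^ 2 + 9 * k ^ 2 * (p : ℤ) * t - 2 * m ^ 3 * (p : ℤ) ^ 2, by
          rw [hb, hk, hm]; ring⟩
      exact hpprime.dvd_of_dvd_pow hdvdb2
    have hdg : (p : ℤ) ∣ (Int.gcd (3 * a1) b : ℤ) := Int.dvd_coe_gcd hpa hpb
    rw [hab] at hdg
    have h1 := Int.le_of_dvd (by norm_num) hdg
    have h2 := hp.two_le
    omega
  -- Q is a perfect square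
  obtain ⟨n, hn⟩ := Int.sq_of_isCoprime hcop.symm
    (show (207 * v ^ 2 - 36 * v * t + 2 * t ^ 2) * v = a1 ^ 2 by rw [mul_comm]; exact hA1.symm)
  have hQn : 207 * v ^ 2 - 36 * v * t + 2 * t ^ 2 = n ^ 2 := by
    rcases hn with h | h
    · exact h
    · exfalso; nlinarith [sq_nonneg n]
  -- final contradiction mod 8: n² = 207v² - 36vt + 2t² with v odd
  obtain ⟨k, hk⟩ : ∃ k, v = 2 * k + 1 := ⟨v / 2, by omega⟩
  have key : n ^ 2 = 207 * (2 * k + 1) ^ 2 - 36 * (2 * k + 1) * t + 2 * t ^ 2 := by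
    rw [← hk, hQn]
  have hfin := congrArg (fun x : ℤ => (x : ZMod 8)) key
  push_cast at hfin
  revert hfin
  generalize (n : ZMod 8) = N
  generalize (k : ZMod 8) = K
  generalize (t : ZMod 8) = T
  revert N K T
  decide
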